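/- arXiv:2302.02686 — 8 statements merged into one kernel-verified Lean document; each statement's English description precedes it below -/
import Mathlib

section
/- If c is a well-defined configuration of a well-formed Token Flow Graph G(E) for an E-equivalence (N1,m1) ▷_E (N2,m2), then the system of equations E together with the assignments {v = c(v) : c(v) defined} is consistent (has a non-negative integer solution). Conversely, if c is a total configuration of G(E) such that E together with the assignments given by c is consistent, then c is well-defined. -/
open Finset

/-- A Petri net over a type of places `P`. -/
structure PetriNet (P : Type) where
  Trans : Type
  pre : Trans → P → ℕ
  post : Trans → P → ℕ

/-- Firing relation between markings. -/
def PetriNet.fire {P : Type} (N : PetriNet P) (m m' : P → ℕ) : Prop :=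
  ∃ t : N.Trans, (∀ p, N.pre t p ≤ m p) ∧ ∀ p, m' p = m p - N.pre t p + N.post t p

/-- Reachability of a marking from an initial one. -/
def PetriNet.reach {P : Type} (N : PetriNet P) (m0 m : P → ℕ) : Prop :=
  Relation.ReflTransGen N.fire m0 m

/-- A marked net is safe (1-bounded) when every reachable marking has at most one token per place. -/
def PetriNet.Safe {P : Type} (N : PetriNet P) (m0 : P → ℕ) : Prop :=
  ∀ m, N.reach m0 m → ∀ p, m p ≤ 1

/-- Two places are concurrent when some reachable marking marks both positively. -/
def PetriNet.ConcPlaces {P : Type} (N : PetriNet P) (m0 : P → ℕ) (p q : P) : Prop :=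
  ∃ m, N.reach m0 m ∧ 0 < m p ∧ 0 < m q

/-- A Token Flow Graph: redundancy arcs `R`, agglomeration arcs `A` (disjoint from `R`,
enforced in well-formedness), and constant nodes given by `kval`. -/
structure TFG (V : Type) [DecidableEq V] where
  R : Finset (V × V)
  A : Finset (V × V)
  kval : V → Option ℕ

variable {V : Type} [DecidableEq V]

def TFG.Edge (G : TFG V) (v w : V) : Prop := (v, w) ∈ G.R ∨ (v, w) ∈ G.A

/-- `G.Reach v w` means `v →* w`. -/
def TFG.Reach (G : TFG V) : V → V → Prop := Relation.ReflTransGen G.Edge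

/-- Successor set `succ(v)` (includes `v` itself). -/
def TFG.succs (G : TFG V) (v : V) : Set V := {w | G.Reach v w}

/-- A root has no incoming arc. -/
def TFG.IsRoot (G : TFG V) (v : V) : Prop := ∀ w, ¬ G.Edge w v

/-- A ∘-leaf has no outgoing agglomeration arc. -/
def TFG.IsCircLeaf (G : TFG V) (v : V) : Prop := ∀ w, (v, w) ∉ G.A

/-- The set `X` such that `v ∘→ X` (agglomeration children of `v`). -/
def TFG.aggChildren (G : TFG V) (v : V) : Finset V :=
  (G.A.filter (fun e => e.1 = v)).image Prod.snd

/-- The set `X` such that `X →• v` (redundancy parents of `v`). -/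
def TFG.redParents (G : TFG V) (v : V) : Finset V :=
  (G.R.filter (fun e => e.2 = v)).image Prod.fst

/-- A configuration is a partial valuation of the nodes; it must agree with constant nodes. -/
def TFG.IsConfig (G : TFG V) (c : V → Option ℕ) : Prop :=
  ∀ v n, G.kval v = some n → c v = some n

/-- A configuration is total when it is defined on every node. -/
def TotalConf (c : V → Option ℕ) : Prop := ∀ v, c v ≠ none

/-- Value of a configuration at a node (0 if undefined). -/
def cval (c : V → Option ℕ) (v : V) : ℕ := (c v).getD 0

/-- Well-definedness of a configuration: conditions (CBot) and (CEq). -/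
def TFG.WellDef (G : TFG V) (c : V → Option ℕ) : Prop :=
  (∀ v w, G.Edge v w → (c v = none ↔ c w = none)) ∧
  (∀ v n, c v = some n →
    ((G.aggChildren v).Nonempty → n = ∑ w ∈ G.aggChildren v, cval c w) ∧
    ((G.redParents v).Nonempty → n = ∑ w ∈ G.redParents v, cval c w))

/-- A system of reduction equations: `(v, X)` stands for the equation `v = ∑_{w ∈ X} w`. -/
abbrev EqSys (V : Type) := Finset (V × Finset V)

/-- A (non-negative integer) solution of the system `E`. -/
def Solves (E : EqSys V) (s : V → ℕ) : Prop :=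
  ∀ e ∈ E, s e.1 = ∑ w ∈ e.2, s w

/-- `E, ⟦c⟧` is consistent: some solution of `E` extends the partial valuation `c`. -/
def ConsistentWith (E : EqSys V) (c : V → Option ℕ) : Prop :=
  ∃ s : V → ℕ, Solves E s ∧ ∀ v n, c v = some n → s v = n

/-- Variables occurring in `E`. -/
def fvars (E : EqSys V) : Set V := {v | ∃ e ∈ E, v = e.1 ∨ v ∈ e.2}

/-- View a marking over the set of places `P` as a partial configuration over `V`. -/
def mconf (P : Set V) [DecidablePred (· ∈ P)] (m : ↥P → ℕ) : V → Option ℕ :=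
  fun v => if h : v ∈ P then some (m ⟨v, h⟩) else none

/-- Restriction of a configuration to a set of places, seen as a marking. -/
def restrict (c : V → Option ℕ) (P : Set V) : ↥P → ℕ := fun p => cval c ↑p

/-- Compatibility `c ≡ m` of a configuration with a marking on `P`. -/
def CompatM (c : V → Option ℕ) (P : Set V) (m : ↥P → ℕ) : Prop :=
  ∀ p : ↥P, c ↑p = some (m p)

/-- A solution of `E` agrees with a marking on `P`. -/
def AgreesOn (s : V → ℕ) (P : Set V) (m : ↥P → ℕ) : Prop := ∀ p : ↥P, s ↑p = m p

/-- `E`-equivalence `(N1,m1) ▷_E (N2,m2)`: conditions (A1), (A2), (A3). -/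
structure EEquiv (E : EqSys V) (P1 P2 : Set V)
    (N1 : PetriNet ↥P1) (m1 : ↥P1 → ℕ) (N2 : PetriNet ↥P2) (m2 : ↥P2 → ℕ) : Prop where
  A1l : ∀ m, N1.reach m1 m → ∃ s, Solves E s ∧ AgreesOn s P1 m
  A1r : ∀ m, N2.reach m2 m → ∃ s, Solves E s ∧ AgreesOn s P2 m
  A2 : ∃ s, Solves E s ∧ AgreesOn s P1 m1 ∧ AgreesOn s P2 m2
  A3 : ∀ m1' m2', (∃ s, Solves E s ∧ AgreesOn s P1 m1' ∧ AgreesOn s P2 m2') →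
      (N1.reach m1 m1' ↔ N2.reach m2 m2')

/-- Well-formedness of a TFG for an equivalence statement: conditions (T1)–(T6). -/
structure WellFormed (G : TFG V) (E : EqSys V) (P1 P2 : Set V) : Prop where
  T1 : {v | G.kval v = none} = P1 ∪ P2 ∪ fvars E
  T2 : ∀ v, G.kval v ≠ none → G.IsRoot v
  T3a : ∀ p p' q, (p, q) ∈ G.A → G.Edge p' q → p' = p
  T3b : ∀ p q, ¬((p, q) ∈ G.R ∧ (p, q) ∈ G.A)
  T4 : ∀ v X, ((X = G.aggChildren v ∨ X = G.redParents v) ∧ X.Nonempty) ↔ (v, X) ∈ E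
  T5 : ∀ v, ¬ Relation.TransGen G.Edge v v
  T6root : ∀ v, G.kval v = none → (G.IsRoot v ↔ v ∈ P2)
  T6leaf : ∀ v, G.kval v = none → (G.IsCircLeaf v ↔ v ∈ P1)

/-- Node concurrency relation of the TFG: both nodes are positive in some
total, well-defined configuration whose restriction to `N2` is reachable. -/
def NodeConc (G : TFG V) (P2 : Set V) [DecidablePred (· ∈ P2)]
    (N2 : PetriNet ↥P2) (m2 : ↥P2 → ℕ) (v w : V) : Prop :=
  ∃ c, G.IsConfig c ∧ TotalConf c ∧ G.WellDef c ∧ N2.reach m2 (restrict c P2) ∧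
    0 < cval c v ∧ 0 < cval c w

theorem wellDefined_configurations_are_solutions {V : Type} [DecidableEq V] (G : TFG V) (E : EqSys V)
    (P1 P2 : Set V) [DecidablePred (· ∈ P1)] [DecidablePred (· ∈ P2)]
    (N1 : PetriNet ↥P1) (m1 : ↥P1 → ℕ) (N2 : PetriNet ↥P2) (m2 : ↥P2 → ℕ)
    (hwf : WellFormed G E P1 P2) (heq : EEquiv E P1 P2 N1 m1 N2 m2) :
    (∀ c : V → Option ℕ, G.IsConfig c → G.WellDef c → ConsistentWith E c) ∧
    (∀ c : V → Option ℕ, G.IsConfig c → TotalConf c → ConsistentWith E c → G.WellDef c) := by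
  obtain ⟨s0, hs0, -⟩ := heq.A2
  constructor
  · rintro c hcfg ⟨hbot, heqc⟩
    refine ⟨fun v => (c v).getD (s0 v), ?_, ?_⟩
    · rintro ⟨v, X⟩ he
      obtain ⟨hX, hXne⟩ := (hwf.T4 v X).mpr he
      have hedge : ∀ w ∈ X, (c v = none ↔ c w = none) := by
        intro w hw
        rcases hX with h | h
        · subst h
          simp only [TFG.aggChildren, Finset.mem_image, Finset.mem_filter] at hw
          obtain ⟨e, ⟨heA, h1⟩, h2⟩ := hw
          have : (v, w) ∈ G.A := by
            rcases e with ⟨a, b⟩; simp at h1 h2; subst h1; subst h2; exact heA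
          exact hbot v w (Or.inr this)
        · subst h
          simp only [TFG.redParents, Finset.mem_image, Finset.mem_filter] at hw
          obtain ⟨e, ⟨heR, h1⟩, h2⟩ := hw
          have : (w, v) ∈ G.R := by
            rcases e with ⟨a, b⟩; simp at h1 h2; subst h1; subst h2; exact heR
          exact (hbot w v (Or.inl this)).symm
      cases hc : c v with
      | none =>
        have hsum : ∀ w ∈ X, (c w).getD (s0 w) = s0 w := by
          intro w hw
          have : c w = none := (hedge w hw).mp hc
          simp [this]
        simp only [hc, Option.getD_none]
        rw [Finset.sum_congr rfl hsum]
        exact hs0 _ he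
      | some n =>
        have hv := heqc v n hc
        have hval : n = ∑ w ∈ X, cval c w := by
          rcases hX with h | h
          · subst h; exact hv.1 hXne
          · subst h; exact hv.2 hXne
        have hsum : ∀ w ∈ X, (c w).getD (s0 w) = cval c w := by
          intro w hw
          have hw' : ¬ c w = none := by
            intro h; rw [← hedge w hw] at h; simp [hc] at h
          cases hcw : c w with
          | none => exact absurd hcw hw'
          | some m => simp [cval, hcw]
        simp only [hc, Option.getD_some]
        rw [Finset.sum_congr rfl hsum]
        exact hval
    · intro v n h; simp [h]
  · rintro c hcfg htot ⟨s, hs, hext⟩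
    have hsv : ∀ u, s u = cval c u := by
      intro u
      cases hu : c u with
      | none => exact absurd hu (htot u)
      | some m => rw [hext u m hu]; simp [cval, hu]
    refine ⟨fun v w _ => by simp [htot v, htot w], ?_⟩
    intro v n hvn
    have hv : s v = n := hext v n hvn
    constructor
    · intro hne
      have he : (v, G.aggChildren v) ∈ E := (hwf.T4 v _).mp ⟨Or.inl rfl, hne⟩
      have := hs _ he
      rw [hv] at this
      rw [this]
      exact Finset.sum_congr rfl fun w _ => hsv w
    · intro hne
      have he : (v, G.redParents v) ∈ E := (hwf.T4 v _).mp ⟨Or.inr rfl, hne⟩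
      have := hs _ he
      rw [hv] at this
      rw [this]
      exact Finset.sum_congr rfl fun w _ => hsv w
end

section
/- Let G(E) be a well-formed TFG for (N1,m1) ▷_E (N2,m2) and c a well-defined configuration. If p ∘→ {q1,...,qk} (p agglomerates into q1,...,qk) and c(p) ≠ ⊥, then for every sequence (l1,...,lk) of natural numbers with c(p) = l1 + ... + lk, there exists a well-defined configuration c' such that c'(p) = c(p), c'(qi) = li for all i, and c'(v) = c(v) for every node v not in the successor set of p. -/
open Finset

variable {V : Type} [DecidableEq V]

section AuxTPA

variable {V : Type} [DecidableEq V]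

lemma mem_aggChildren_tpa {G : TFG V} {v w : V} :
    w ∈ G.aggChildren v ↔ (v, w) ∈ G.A := by
  constructor
  · intro h
    simp only [TFG.aggChildren, Finset.mem_image, Finset.mem_filter] at h
    obtain ⟨e, ⟨he, h1⟩, h2⟩ := h
    have : e = (v, w) := by cases e; simp_all
    rwa [this] at he
  · intro h
    simp only [TFG.aggChildren, Finset.mem_image, Finset.mem_filter]
    exact ⟨(v, w), ⟨h, rfl⟩, rfl⟩

lemma mem_redParents_tpa {G : TFG V} {v w : V} :
    w ∈ G.redParents v ↔ (w, v) ∈ G.R := by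
  constructor
  · intro h
    simp only [TFG.redParents, Finset.mem_image, Finset.mem_filter] at h
    obtain ⟨e, ⟨he, h1⟩, h2⟩ := h
    have : e = (w, v) := by cases e; simp_all
    rwa [this] at he
  · intro h
    simp only [TFG.redParents, Finset.mem_image, Finset.mem_filter]
    exact ⟨(w, v), ⟨h, rfl⟩, rfl⟩

noncomputable def pick_tpa (G : TFG V) (v : V) : V :=
  if h : (G.aggChildren v).Nonempty then h.choose else v

lemma pick_tpa_mem {G : TFG V} {v : V} (h : (G.aggChildren v).Nonempty) :
    pick_tpa G v ∈ G.aggChildren v := by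
  rw [pick_tpa, dif_pos h]; exact h.choose_spec

lemma edge_wf_tpa (G : TFG V) (h5 : ∀ v, ¬ Relation.TransGen G.Edge v v) :
    WellFounded G.Edge := by
  have hfin : ∀ v : V, {u | Relation.TransGen G.Edge u v}.Finite := by
    intro v
    apply Set.Finite.subset ((G.R ∪ G.A).image Prod.fst).finite_toSet
    intro u hu
    have : ∃ w, G.Edge u w := by
      induction hu with
      | single h => exact ⟨_, h⟩
      | tail _ _ ih => exact ih
    obtain ⟨w, hw⟩ := this
    simp only [Finset.coe_image, Set.mem_image, Finset.mem_coe, Finset.mem_union]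
    exact ⟨(u, w), hw, rfl⟩
  have hrank : ∀ u v, G.Edge u v →
      {x | Relation.TransGen G.Edge x u}.ncard < {x | Relation.TransGen G.Edge x v}.ncard := by
    intro u v h
    apply Set.ncard_lt_ncard _ (hfin v)
    constructor
    · intro x hx
      exact Relation.TransGen.tail hx h
    · intro hsub
      exact h5 u (hsub (Relation.TransGen.single h))
  exact Subrelation.wf (fun {u v} h => hrank u v h)
    (InvImage.wf (fun v => {x | Relation.TransGen G.Edge x v}.ncard) Nat.lt_wfRel.wf)

open Classical in
noncomputable def sval_tpa (G : TFG V) (hw : WellFounded G.Edge)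
    (c : V → Option ℕ) (p : V) (n : ℕ) (l : V → ℕ) : V → ℕ :=
  hw.fix (fun v ih =>
    if G.Reach p v then
      if v = p then n
      else if h : ∃ u, (u, v) ∈ G.A then
        if h.choose = p then l v
        else if v = pick_tpa G h.choose then ih h.choose (Or.inr h.choose_spec) else 0
      else ∑ w ∈ (G.redParents v).attach, ih w.1 (Or.inl (mem_redParents_tpa.mp w.2))
    else cval c v)

open Classical in
lemma sval_tpa_eq (G : TFG V) (hw : WellFounded G.Edge)
    (c : V → Option ℕ) (p : V) (n : ℕ) (l : V → ℕ) (v : V) :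
    sval_tpa G hw c p n l v =
      if G.Reach p v then
        if v = p then n
        else if h : ∃ u, (u, v) ∈ G.A then
          if h.choose = p then l v
          else if v = pick_tpa G h.choose then sval_tpa G hw c p n l h.choose else 0
        else ∑ w ∈ (G.redParents v).attach, sval_tpa G hw c p n l w.1
      else cval c v := by
  conv_lhs => rw [sval_tpa, WellFounded.fix_eq]
  rfl

end AuxTPA

theorem token_propagation_agglomeration {V : Type} [DecidableEq V] (G : TFG V) (E : EqSys V)
    (P1 P2 : Set V) [DecidablePred (· ∈ P1)] [DecidablePred (· ∈ P2)]
    (N1 : PetriNet ↥P1) (m1 : ↥P1 → ℕ) (N2 : PetriNet ↥P2) (m2 : ↥P2 → ℕ)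
    (hwf : WellFormed G E P1 P2) (heq : EEquiv E P1 P2 N1 m1 N2 m2)
    (c : V → Option ℕ) (hc : G.IsConfig c) (hwd : G.WellDef c)
    (p : V) (X : Finset V) (hX : X = G.aggChildren p) (hXne : X.Nonempty)
    (n : ℕ) (hp : c p = some n)
    (l : V → ℕ) (hl : n = ∑ w ∈ X, l w) :
    ∃ c' : V → Option ℕ, G.IsConfig c' ∧ G.WellDef c' ∧
      c' p = some n ∧ (∀ w ∈ X, c' w = some (l w)) ∧
      (∀ v, v ∉ G.succs p → c' v = c v) := by
  classical
  obtain ⟨hT1, hT2, hT3a, hT3b, hT4, hT5, hT6r, hT6l⟩ := hwf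
  have hw : WellFounded G.Edge := edge_wf_tpa G hT5
  set s := sval_tpa G hw c p n l with hs
  have hreach_p : G.Reach p p := Relation.ReflTransGen.refl
  -- basic value lemmas
  have s_notreach : ∀ v, ¬ G.Reach p v → s v = cval c v := by
    intro v h; rw [hs, sval_tpa_eq, if_neg h]
  have s_p : s p = n := by
    rw [hs, sval_tpa_eq, if_pos hreach_p, if_pos rfl]
  have hnocycle : ∀ v, G.Reach p v → ∀ u, G.Edge v u → u ≠ p := by
    intro v hv u he hup
    subst hup
    exact hT5 u (Relation.TransGen.tail' hv he)
  have s_agg : ∀ v w, G.Reach p v → (v, w) ∈ G.A →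
      s w = if v = p then l w else if w = pick_tpa G v then s v else 0 := by
    intro v w hv hvw
    have hrw : G.Reach p w := hv.tail (Or.inr hvw)
    have hwp : w ≠ p := hnocycle v hv w (Or.inr hvw)
    have hex : ∃ u, (u, w) ∈ G.A := ⟨v, hvw⟩
    have hch : hex.choose = v := hT3a v hex.choose w hvw (Or.inr hex.choose_spec)
    rw [hs, sval_tpa_eq, if_pos hrw, if_neg hwp, dif_pos hex, hch]
  have s_sum : ∀ v, G.Reach p v → (G.aggChildren v).Nonempty →
      ∑ w ∈ G.aggChildren v, s w = s v := by
    intro v hv hne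
    by_cases hvp : v = p
    · subst hvp
      have hstep : ∀ w ∈ G.aggChildren v, s w = l w := by
        intro w hwmem
        rw [s_agg v w hv (mem_aggChildren_tpa.mp hwmem), if_pos rfl]
      rw [Finset.sum_congr rfl hstep, s_p, ← hX]
      exact hl.symm
    · have hstep : ∀ w ∈ G.aggChildren v, s w = if w = pick_tpa G v then s v else 0 := by
        intro w hwmem
        rw [s_agg v w hv (mem_aggChildren_tpa.mp hwmem), if_neg hvp]
      rw [Finset.sum_congr rfl hstep,
        Finset.sum_ite_eq' (G.aggChildren v) (pick_tpa G v) (fun _ => s v),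
        if_pos (pick_tpa_mem hne)]
  have s_red : ∀ v, G.Reach p v → v ≠ p → (¬ ∃ u, (u, v) ∈ G.A) →
      s v = ∑ w ∈ G.redParents v, s w := by
    intro v hv hvp hna
    rw [hs, sval_tpa_eq, if_pos hv, if_neg hvp, dif_neg hna]
    exact Finset.sum_attach _ _
  have noAggRed : ∀ v, (∃ u, (u, v) ∈ G.A) → G.redParents v = ∅ := by
    rintro v ⟨u, hu⟩
    rw [Finset.eq_empty_iff_forall_notMem]
    intro w hwv
    have hR := mem_redParents_tpa.mp hwv
    have hwu : w = u := hT3a u w v hu (Or.inl hR)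
    exact hT3b u v ⟨hwu ▸ hR, hu⟩
  have creach_ne : ∀ v, G.Reach p v → c v ≠ none := by
    intro v hv
    induction hv with
    | refl => simp [hp]
    | tail h e ih => intro hn; exact ih ((hwd.1 _ _ e).mpr hn)
  have reach_inc : ∀ v, G.Reach p v → v = p ∨ ∃ u, G.Edge u v ∧ G.Reach p u := by
    intro v hv
    rcases hv.cases_tail with h | ⟨u, hu, he⟩
    · exact Or.inl h
    · exact Or.inr ⟨u, he, hu⟩
  have hcross : ∀ v w, ¬ G.Reach p v → (v, w) ∈ G.A → G.Reach p w → w = p := by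
    intro v w hv hvw hrw
    rcases reach_inc w hrw with h | ⟨u, he, hu⟩
    · exact h
    · exact absurd (hT3a v u w hvw he ▸ hu) hv
  -- the new configuration
  set c' : V → Option ℕ := fun v => if G.Reach p v then some (s v) else c v with hc'def
  have hc'some : ∀ v, G.Reach p v → c' v = some (s v) := by
    intro v h; rw [hc'def]; simp only [if_pos h]
  have hc'out : ∀ v, ¬ G.Reach p v → c' v = c v := by
    intro v h; rw [hc'def]; simp only [if_neg h]
  have hc'val : ∀ v, cval c' v = s v := by
    intro v
    by_cases h : G.Reach p v
    · rw [cval, hc'some v h]; rfl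
    · rw [cval, hc'out v h, s_notreach v h]; rfl
  refine ⟨c', ?_, ⟨?_, ?_⟩, ?_, ?_, ?_⟩
  · -- IsConfig
    intro v k hk
    by_cases hv : G.Reach p v
    · have hroot := hT2 v (by rw [hk]; exact Option.some_ne_none k)
      have hvp : v = p := by
        rcases reach_inc v hv with h | ⟨u, he, _⟩
        · exact h
        · exact absurd he (hroot u)
      subst hvp
      have hck : c v = some k := hc v k hk
      rw [hp] at hck
      rw [hc'some v hv, s_p, Option.some_inj.mp hck]
    · rw [hc'out v hv]; exact hc v k hk
  · -- CBot
    intro v w he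
    by_cases hv : G.Reach p v
    · have hw2 : G.Reach p w := hv.tail he
      rw [hc'some v hv, hc'some w hw2]
      simp
    · by_cases hw2 : G.Reach p w
      · rw [hc'out v hv, hc'some w hw2]
        have h1 : c w ≠ none := creach_ne w hw2
        have h2 : c v ≠ none := fun hn => h1 ((hwd.1 v w he).mp hn)
        simp [h2]
      · rw [hc'out v hv, hc'out w hw2]
        exact hwd.1 v w he
  · -- CEq
    intro v m hm
    by_cases hv : G.Reach p v
    · rw [hc'some v hv] at hm
      obtain rfl : s v = m := Option.some_inj.mp hm
      constructor
      · intro hne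
        rw [Finset.sum_congr rfl (fun w _ => hc'val w)]
        exact (s_sum v hv hne).symm
      · intro hne
        by_cases hvp : v = p
        · subst hvp
          have hceq := (hwd.2 v n hp).2 hne
          have hstep : ∀ w ∈ G.redParents v, cval c' w = cval c w := by
            intro w hwm
            have hR := mem_redParents_tpa.mp hwm
            have hnw : ¬ G.Reach v w := fun hr =>
              hT5 v (Relation.TransGen.tail' hr (Or.inl hR))
            rw [hc'val w, s_notreach w hnw]
          rw [Finset.sum_congr rfl hstep, s_p]
          exact hceq
        · rcases Classical.em (∃ u, (u, v) ∈ G.A) with hA | hA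
          · rw [noAggRed v hA] at hne
            exact absurd hne (by simp)
          · rw [Finset.sum_congr rfl (fun w _ => hc'val w)]
            exact s_red v hv hvp hA
    · rw [hc'out v hv] at hm
      have hceq := hwd.2 v m hm
      constructor
      · intro hne
        have hstep : ∀ w ∈ G.aggChildren v, cval c' w = cval c w := by
          intro w hwm
          have hA := mem_aggChildren_tpa.mp hwm
          by_cases hrw : G.Reach p w
          · have hwp := hcross v w hv hA hrw
            subst hwp
            rw [hc'val w, s_p, cval, hp]
            rfl
          · rw [hc'val w, s_notreach w hrw]
        rw [Finset.sum_congr rfl hstep]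
        exact hceq.1 hne
      · intro hne
        have hstep : ∀ w ∈ G.redParents v, cval c' w = cval c w := by
          intro w hwm
          have hnr : ¬ G.Reach p w := fun hr =>
            hv (hr.tail (Or.inl (mem_redParents_tpa.mp hwm)))
          rw [hc'val w, s_notreach w hnr]
        rw [Finset.sum_congr rfl hstep]
        exact hceq.2 hne
  · -- value at p
    rw [hc'some p hreach_p, s_p]
  · -- values at children
    intro w hwm
    rw [hX] at hwm
    have hA := mem_aggChildren_tpa.mp hwm
    have hrw : G.Reach p w := Relation.ReflTransGen.single (Or.inr hA)
    rw [hc'some w hrw, s_agg p w hreach_p hA, if_pos rfl]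
  · -- unchanged outside succs p
    intro v hv
    exact hc'out v hv
end

section
/- Let G(E) be a well-formed TFG for (N1,m1) ▷_E (N2,m2) and c a well-defined configuration. If p, q are nodes with c(p) ≠ ⊥ and p →* q, then there exists a well-defined configuration c' with c'(q) ≥ c'(p) = c(p) and c'(v) = c(v) for every node v not in succ(p). -/
open Finset

variable {V : Type} [DecidableEq V]

section TokenPropAux

open Relation
open scoped Classical

variable {V : Type} [DecidableEq V]

lemma mem_aggChildren {G : TFG V} {y w : V} : w ∈ G.aggChildren y ↔ (y, w) ∈ G.A := by
  simp only [TFG.aggChildren, Finset.mem_image, Finset.mem_filter]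
  constructor
  · rintro ⟨⟨a, b⟩, ⟨h, rfl⟩, rfl⟩; exact h
  · intro h; exact ⟨(y, w), ⟨h, rfl⟩, rfl⟩

lemma mem_redParents {G : TFG V} {y u : V} : y ∈ G.redParents u ↔ (y, u) ∈ G.R := by
  simp only [TFG.redParents, Finset.mem_image, Finset.mem_filter]
  constructor
  · rintro ⟨⟨a, b⟩, ⟨h, rfl⟩, rfl⟩; exact h
  · intro h; exact ⟨(y, u), ⟨h, rfl⟩, rfl⟩

/-- The agglomeration-parents of a node. -/
def aggParents (G : TFG V) (u : V) : Finset V :=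
  (G.A.filter (fun e => e.2 = u)).image Prod.fst

lemma mem_aggParents {G : TFG V} {y u : V} : y ∈ aggParents G u ↔ (y, u) ∈ G.A := by
  simp only [aggParents, Finset.mem_image, Finset.mem_filter]
  constructor
  · rintro ⟨⟨a, b⟩, ⟨h, rfl⟩, rfl⟩; exact h
  · intro h; exact ⟨(y, u), ⟨h, rfl⟩, rfl⟩

/-- Number of strict ancestors of a node. -/
noncomputable def ancCard (G : TFG V) (u : V) : ℕ :=
  (((G.R ∪ G.A).image Prod.fst).filter (fun z => Relation.TransGen G.Edge z u)).card

lemma edge_src_mem {G : TFG V} {y u : V} (h : G.Edge y u) :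
    y ∈ (G.R ∪ G.A).image Prod.fst := by
  rcases h with h | h
  · exact Finset.mem_image.mpr ⟨(y, u), Finset.mem_union_left _ h, rfl⟩
  · exact Finset.mem_image.mpr ⟨(y, u), Finset.mem_union_right _ h, rfl⟩

lemma ancCard_lt {G : TFG V} (hacyc : ∀ x, ¬ Relation.TransGen G.Edge x x)
    {y u : V} (h : G.Edge y u) : ancCard G y < ancCard G u := by
  apply Finset.card_lt_card
  rw [Finset.ssubset_iff_of_subset]
  · exact ⟨y, Finset.mem_filter.mpr ⟨edge_src_mem h, Relation.TransGen.single h⟩,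
      fun hy => hacyc y (Finset.mem_filter.mp hy).2⟩
  · intro z hz
    rw [Finset.mem_filter] at hz ⊢
    exact ⟨hz.1, hz.2.tail h⟩

/-- The child of `y` that receives all of `y`'s token value. -/
noncomputable def chosenChild (G : TFG V) (p v : V) (y : V) : V :=
  if y = p ∧ (p, v) ∈ G.A then v
  else if h : (G.aggChildren y).Nonempty then h.choose else y

lemma chosenChild_mem {G : TFG V} {p v y : V} (h : (G.aggChildren y).Nonempty) :
    chosenChild G p v y ∈ G.aggChildren y := by
  unfold chosenChild
  split
  · next hy => exact hy.1 ▸ mem_aggChildren.mpr hy.2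
  · exact h.choose_spec

/-- The new token values on the cone below `p`. -/
noncomputable def gfun (G : TFG V) (hacyc : ∀ x, ¬ Relation.TransGen G.Edge x x)
    (c : V → Option ℕ) (p v : V) (n : ℕ) (u : V) : ℕ :=
  if u = p then n
  else if h : (aggParents G u).Nonempty then
    (if u = chosenChild G p v h.choose then gfun G hacyc c p v n h.choose else 0)
  else (∑ y ∈ (G.redParents u).attach,
      if Relation.ReflTransGen G.Edge p y.1 then gfun G hacyc c p v n y.1 else cval c y.1)
termination_by ancCard G u
decreasing_by
  · exact ancCard_lt hacyc (Or.inr (mem_aggParents.mp h.choose_spec))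
  · exact ancCard_lt hacyc (Or.inl (mem_redParents.mp y.2))

lemma gfun_p {G : TFG V} (hacyc : ∀ x, ¬ Relation.TransGen G.Edge x x)
    (c : V → Option ℕ) (p v : V) (n : ℕ) : gfun G hacyc c p v n p = n := by
  rw [gfun]; simp

lemma gfun_aggChild {G : TFG V} (hacyc : ∀ x, ¬ Relation.TransGen G.Edge x x)
    (hT3a : ∀ a b q, (a, q) ∈ G.A → G.Edge b q → b = a)
    (c : V → Option ℕ) (p v : V) (n : ℕ) {y u : V} (hy : (y, u) ∈ G.A) (hup : u ≠ p) :
    gfun G hacyc c p v n u =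
      if u = chosenChild G p v y then gfun G hacyc c p v n y else 0 := by
  have hne : (aggParents G u).Nonempty := ⟨y, mem_aggParents.mpr hy⟩
  have hcy : hne.choose = y := hT3a y hne.choose u hy (Or.inr (mem_aggParents.mp hne.choose_spec))
  rw [gfun, if_neg hup, dif_pos hne, hcy]

lemma gfun_red {G : TFG V} (hacyc : ∀ x, ¬ Relation.TransGen G.Edge x x)
    (c : V → Option ℕ) (p v : V) (n : ℕ) {u : V} (hup : u ≠ p)
    (hnoA : ¬ (aggParents G u).Nonempty) :
    gfun G hacyc c p v n u =
      ∑ y ∈ G.redParents u,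
        (if Relation.ReflTransGen G.Edge p y then gfun G hacyc c p v n y else cval c y) := by
  rw [gfun, if_neg hup, dif_neg hnoA,
    Finset.sum_attach (G.redParents u)
      (fun y => if Relation.ReflTransGen G.Edge p y then gfun G hacyc c p v n y else cval c y)]

lemma one_step {G : TFG V} {E : EqSys V} {P1 P2 : Set V}
    (hwf : WellFormed G E P1 P2)
    (c : V → Option ℕ) (hc : G.IsConfig c) (hwd : G.WellDef c)
    (p v : V) (n : ℕ) (hp : c p = some n) (hpv : G.Edge p v) :
    ∃ c' : V → Option ℕ, G.IsConfig c' ∧ G.WellDef c' ∧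
      c' p = some n ∧ (∃ m, n ≤ m ∧ c' v = some m) ∧
      (∀ u, u ∉ G.succs p → c' u = c u) := by
  have hacyc : ∀ x, ¬ Relation.TransGen G.Edge x x := hwf.T5
  set g := gfun G hacyc c p v n with hg
  set c' : V → Option ℕ :=
    fun u => if Relation.ReflTransGen G.Edge p u then some (g u) else c u with hc'def
  have hgp : g p = n := gfun_p hacyc c p v n
  have cone_ne : ∀ u, Relation.ReflTransGen G.Edge p u → c u ≠ none := by
    intro u h
    induction h with
    | refl => simp [hp]
    | tail _ h2 ih => exact fun hn => ih ((hwd.1 _ _ h2).mpr hn)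
  have notp_edge : ∀ u, Relation.ReflTransGen G.Edge p u → u ≠ p →
      ∃ z, Relation.ReflTransGen G.Edge p z ∧ G.Edge z u := by
    intro u h hup
    rcases Relation.ReflTransGen.cases_tail h with h1 | ⟨z, hz, he⟩
    · exact absurd h1 hup
    · exact ⟨z, hz, he⟩
  have parentsp : ∀ y, G.Edge y p → ¬ Relation.ReflTransGen G.Edge p y := by
    intro y he hy
    exact hacyc p (Relation.TransGen.tail' hy he)
  have cone_c' : ∀ u, Relation.ReflTransGen G.Edge p u → c' u = some (g u) := by
    intro u hu; simp [hc'def, hu]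
  have out_c' : ∀ u, ¬ Relation.ReflTransGen G.Edge p u → c' u = c u := by
    intro u hu; simp [hc'def, hu]
  have noAgg : ∀ u y, (y, u) ∈ G.R → ¬ (aggParents G u).Nonempty := by
    rintro u y hR ⟨z, hz⟩
    have hz' := mem_aggParents.mp hz
    have := hwf.T3a z y u hz' (Or.inl hR)
    exact hwf.T3b z u ⟨this ▸ hR, hz'⟩
  have cbot : ∀ x, (c' x = none ↔ c x = none) := by
    intro x
    by_cases hx : Relation.ReflTransGen G.Edge p x
    · rw [cone_c' x hx]
      simp only [iff_iff_implies_and_implies]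
      exact ⟨fun h => absurd h (by simp), fun h => absurd h (cone_ne x hx)⟩
    · rw [out_c' x hx]
  refine ⟨c', ?_, ⟨?_, ?_⟩, ?_, ?_, ?_⟩
  · -- IsConfig
    intro u k hk
    by_cases hu : Relation.ReflTransGen G.Edge p u
    · by_cases hup : u = p
      · subst hup
        rw [cone_c' u hu, hgp]
        rw [hc u k hk] at hp
        exact hp.symm
      · obtain ⟨z, _, he⟩ := notp_edge u hu hup
        exact absurd he (hwf.T2 u (by simp [hk]) z)
    · rw [out_c' u hu]; exact hc u k hk
  · -- CBot
    intro a b hab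
    rw [cbot a, cbot b]
    exact hwd.1 a b hab
  · -- CEq
    intro u m hm
    constructor
    · -- agglomeration equation
      intro hne
      by_cases hu : Relation.ReflTransGen G.Edge p u
      · have hmu : m = g u := by
          rw [cone_c' u hu] at hm; exact (Option.some_inj.mp hm).symm
        have hchild : ∀ w ∈ G.aggChildren u,
            cval c' w = if w = chosenChild G p v u then g u else 0 := by
          intro w hw
          have hwA : (u, w) ∈ G.A := mem_aggChildren.mp hw
          have hwc : Relation.ReflTransGen G.Edge p w := hu.tail (Or.inr hwA)
          have hwp : w ≠ p := by
            intro h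
            have ht := Relation.TransGen.tail' hu (Or.inr hwA)
            rw [h] at ht
            exact hacyc p ht
          rw [cval, cone_c' w hwc, Option.getD_some]
          exact gfun_aggChild hacyc hwf.T3a c p v n hwA hwp
        rw [Finset.sum_congr rfl hchild, Finset.sum_ite_eq' (G.aggChildren u)
          (chosenChild G p v u) (fun _ => g u), if_pos (chosenChild_mem hne), hmu]
      · have hm' : c u = some m := by rw [out_c' u hu] at hm; exact hm
        have := (hwd.2 u m hm').1 hne
        rw [this]
        apply Finset.sum_congr rfl
        intro w hw
        have hwA : (u, w) ∈ G.A := mem_aggChildren.mp hw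
        by_cases hwc : Relation.ReflTransGen G.Edge p w
        · by_cases hwp : w = p
          · subst hwp
            simp only [cval, cone_c' w hwc, hp, Option.getD_some, hgp]
          · obtain ⟨z, hz, he⟩ := notp_edge w hwc hwp
            have := hwf.T3a u z w hwA he
            exact absurd (this ▸ hz) hu
        · simp only [cval, out_c' w hwc]
    · -- redundancy equation
      intro hne
      by_cases hu : Relation.ReflTransGen G.Edge p u
      · by_cases hup : u = p
        · subst hup
          have hmn : m = n := by
            rw [cone_c' u hu, hgp] at hm; exact (Option.some_inj.mp hm).symm
          have := (hwd.2 u n hp).2 hne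
          rw [hmn, this]
          apply Finset.sum_congr rfl
          intro y hy
          have : ¬ Relation.ReflTransGen G.Edge u y :=
            parentsp y (Or.inl (mem_redParents.mp hy))
          simp only [cval, out_c' y this]
        · have hmu : m = g u := by
            rw [cone_c' u hu] at hm; exact (Option.some_inj.mp hm).symm
          obtain ⟨y0, hy0⟩ := hne
          have hnoA : ¬ (aggParents G u).Nonempty := noAgg u y0 (mem_redParents.mp hy0)
          rw [hmu, hg, gfun_red hacyc c p v n hup hnoA]
          apply Finset.sum_congr rfl
          intro y hy
          by_cases hyc : Relation.ReflTransGen G.Edge p y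
          · simp only [if_pos hyc, cval, cone_c' y hyc, Option.getD_some]; rfl
          · simp only [if_neg hyc, cval, out_c' y hyc]
      · have hm' : c u = some m := by rw [out_c' u hu] at hm; exact hm
        have := (hwd.2 u m hm').2 hne
        rw [this]
        apply Finset.sum_congr rfl
        intro y hy
        have hyc : ¬ Relation.ReflTransGen G.Edge p y := by
          intro h
          exact hu (h.tail (Or.inl (mem_redParents.mp hy)))
        simp only [cval, out_c' y hyc]
  · -- value at p
    rw [cone_c' p Relation.ReflTransGen.refl, hgp]
  · -- value at v
    have hvc : Relation.ReflTransGen G.Edge p v := Relation.ReflTransGen.single hpv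
    have hvp : v ≠ p := by
      intro h
      have ht := Relation.TransGen.single hpv
      rw [h] at ht
      exact hacyc p ht
    refine ⟨g v, ?_, cone_c' v hvc⟩
    rcases hpv with hR | hA
    · have hnoA : ¬ (aggParents G v).Nonempty := noAgg v p hR
      rw [hg, gfun_red hacyc c p v n hvp hnoA]
      have hpmem : p ∈ G.redParents v := mem_redParents.mpr hR
      calc n = if Relation.ReflTransGen G.Edge p p then gfun G hacyc c p v n p
              else cval c p := by rw [if_pos Relation.ReflTransGen.refl, gfun_p]
        _ ≤ _ := Finset.single_le_sum
            (f := fun y => if Relation.ReflTransGen G.Edge p y then gfun G hacyc c p v n y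
              else cval c y) (fun y _ => Nat.zero_le _) hpmem
    · have hcc : chosenChild G p v p = v := by
        unfold chosenChild
        rw [if_pos (show p = p ∧ (p, v) ∈ G.A from ⟨rfl, hA⟩)]
      have hgv : g v = n := by
        rw [hg, gfun_aggChild hacyc hwf.T3a c p v n hA hvp, hcc, if_pos rfl]
        exact hgp
      exact hgv.ge
  · -- unchanged outside succ p
    intro u hu
    exact out_c' u hu

lemma propagate {G : TFG V} {E : EqSys V} {P1 P2 : Set V}
    (hwf : WellFormed G E P1 P2) {a b : V} (hab : Relation.ReflTransGen G.Edge a b) :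
    ∀ (c : V → Option ℕ), G.IsConfig c → G.WellDef c → ∀ n, c a = some n →
      ∃ c' : V → Option ℕ, G.IsConfig c' ∧ G.WellDef c' ∧
        c' a = some n ∧ n ≤ cval c' b ∧ (∀ u, u ∉ G.succs a → c' u = c u) := by
  induction hab using Relation.ReflTransGen.head_induction_on with
  | refl =>
      intro c hc hwd n hp
      exact ⟨c, hc, hwd, hp, le_of_eq (by simp [cval, hp]), fun _ _ => rfl⟩
  | @head x y hstep htail ih =>
      intro c hc hwd n hp
      obtain ⟨c₁, hc₁, hwd₁, hc₁p, ⟨m, hnm, hc₁v⟩, hout₁⟩ :=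
        one_step hwf c hc hwd x y n hp hstep
      obtain ⟨c₂, hc₂, hwd₂, hc₂v, hc₂q, hout₂⟩ := ih c₁ hc₁ hwd₁ m hc₁v
      have hxny : x ∉ G.succs y := by
        intro hx
        exact hwf.T5 x (Relation.TransGen.head' hstep hx)
      refine ⟨c₂, hc₂, hwd₂, ?_, le_trans hnm hc₂q, ?_⟩
      · rw [hout₂ x hxny]; exact hc₁p
      · intro u hu
        have huy : u ∉ G.succs y := by
          intro h
          exact hu (Relation.ReflTransGen.head hstep h)
        rw [hout₂ u huy, hout₁ u hu]

end TokenPropAux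
theorem token_propagation_forward {V : Type} [DecidableEq V] (G : TFG V) (E : EqSys V)
    (P1 P2 : Set V) [DecidablePred (· ∈ P1)] [DecidablePred (· ∈ P2)]
    (N1 : PetriNet ↥P1) (m1 : ↥P1 → ℕ) (N2 : PetriNet ↥P2) (m2 : ↥P2 → ℕ)
    (hwf : WellFormed G E P1 P2) (heq : EEquiv E P1 P2 N1 m1 N2 m2)
    (c : V → Option ℕ) (hc : G.IsConfig c) (hwd : G.WellDef c)
    (p q : V) (n : ℕ) (hp : c p = some n) (hpq : G.Reach p q) :
    ∃ c' : V → Option ℕ, G.IsConfig c' ∧ G.WellDef c' ∧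
      c' p = some n ∧ n ≤ cval c' q ∧
      (∀ v, v ∉ G.succs p → c' v = c v) := by
  obtain ⟨c', h1, h2, h3, h4, h5⟩ := propagate hwf hpq c hc hwd n hp
  exact ⟨c', h1, h2, h3, h4, h5⟩
end

section
/- Let G(E) be a well-formed TFG and c a well-defined configuration. If c(p) > 0 for some node p, then there exists a root node v (a node with no incoming arc) such that v →* p and c(v) > 0. -/
open Finset

variable {V : Type} [DecidableEq V]

open Classical in
private lemma aux_back {V : Type} [DecidableEq V] (G : TFG V)
    (hT5 : ∀ v, ¬ Relation.TransGen G.Edge v v)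
    (c : V → Option ℕ) (hwd : G.WellDef c) :
    ∀ n p, ((G.R ∪ G.A).filter (fun e => G.Reach e.2 p)).card ≤ n →
      0 < cval c p →
      ∃ v : V, G.IsRoot v ∧ G.Reach v p ∧ 0 < cval c v := by
  intro n
  induction n with
  | zero =>
    intro p hcard hp
    refine ⟨p, ?_, Relation.ReflTransGen.refl, hp⟩
    intro w hw
    have hmem : (w, p) ∈ (G.R ∪ G.A).filter (fun e => G.Reach e.2 p) := by
      refine Finset.mem_filter.mpr ⟨?_, Relation.ReflTransGen.refl⟩
      rcases hw with h | h
      · exact Finset.mem_union_left _ h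
      · exact Finset.mem_union_right _ h
    have := Finset.card_pos.mpr ⟨_, hmem⟩
    omega
  | succ n ih =>
    intro p hcard hp
    by_cases hroot : G.IsRoot p
    · exact ⟨p, hroot, Relation.ReflTransGen.refl, hp⟩
    · have hex : ∃ w, G.Edge w p := by
        simpa [TFG.IsRoot, not_forall] using hroot
      obtain ⟨w, hw⟩ := hex
      -- card decrease lemma
      have hdec : ∀ v, G.Edge v p →
          ((G.R ∪ G.A).filter (fun e => G.Reach e.2 v)).card ≤ n := by
        intro v hv
        have hss : (G.R ∪ G.A).filter (fun e => G.Reach e.2 v) ⊂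
            (G.R ∪ G.A).filter (fun e => G.Reach e.2 p) := by
          constructor
          · intro e he
            have he' := Finset.mem_filter.mp he
            exact Finset.mem_filter.mpr ⟨he'.1, he'.2.tail hv⟩
          · intro hsub
            have hvp : (v, p) ∈ (G.R ∪ G.A).filter (fun e => G.Reach e.2 p) := by
              refine Finset.mem_filter.mpr ⟨?_, Relation.ReflTransGen.refl⟩
              rcases hv with h | h
              · exact Finset.mem_union_left _ h
              · exact Finset.mem_union_right _ h
            have := (Finset.mem_filter.mp (hsub hvp)).2
            exact hT5 p (Relation.TransGen.tail' this hv)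
        have := Finset.card_lt_card hss
        omega
      -- c p = some m with m > 0
      cases hcp : c p with
      | none => simp [cval, hcp] at hp
      | some m =>
        have hm : 0 < m := by simpa [cval, hcp] using hp
        -- find v with Edge v p and 0 < cval c v
        have hstep : ∃ v, G.Edge v p ∧ 0 < cval c v := by
          rcases hw with hR | hA
          · -- redundancy arc: use (CEq) at p
            have hwmem : w ∈ G.redParents p :=
              Finset.mem_image.mpr ⟨(w, p), Finset.mem_filter.mpr ⟨hR, rfl⟩, rfl⟩
            have hsum := (hwd.2 p m hcp).2 ⟨w, hwmem⟩
            by_contra hcon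
            push_neg at hcon
            have hz : ∀ x ∈ G.redParents p, cval c x = 0 := by
              intro x hx
              have hxR : (x, p) ∈ G.R := by
                obtain ⟨e, he, he2⟩ := Finset.mem_image.mp hx
                have := Finset.mem_filter.mp he
                have : e = (x, p) := by
                  cases e; simp_all
                rw [this] at he
                exact (Finset.mem_filter.mp he).1
              have := hcon x (Or.inl hxR)
              omega
            rw [Finset.sum_eq_zero hz] at hsum
            omega
          · -- agglomeration arc: value of w bounds value of p
            have hcw : c w ≠ none := by
              intro hn
              have := (hwd.1 w p (Or.inr hA)).mp hn
              simp [this] at hcp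
            cases hcw' : c w with
            | none => exact absurd hcw' hcw
            | some k =>
              have hpmem : p ∈ G.aggChildren w :=
                Finset.mem_image.mpr ⟨(w, p), Finset.mem_filter.mpr ⟨hA, rfl⟩, rfl⟩
              have hsum := (hwd.2 w k hcw').1 ⟨p, hpmem⟩
              have hle : cval c p ≤ ∑ x ∈ G.aggChildren w, cval c x :=
                Finset.single_le_sum (fun x _ => Nat.zero_le _) hpmem
              refine ⟨w, Or.inr hA, ?_⟩
              simp only [cval, hcw', Option.getD_some]
              simp only [cval, hcp, Option.getD_some] at hle
              simp only [cval] at hsum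
              omega
        obtain ⟨v, hv, hval⟩ := hstep
        obtain ⟨r, hr1, hr2, hr3⟩ := ih v (hdec v hv) hval
        exact ⟨r, hr1, hr2.tail hv, hr3⟩

theorem token_propagation_backward {V : Type} [DecidableEq V] (G : TFG V) (E : EqSys V)
    (P1 P2 : Set V) [DecidablePred (· ∈ P1)] [DecidablePred (· ∈ P2)]
    (N1 : PetriNet ↥P1) (m1 : ↥P1 → ℕ) (N2 : PetriNet ↥P2) (m2 : ↥P2 → ℕ)
    (hwf : WellFormed G E P1 P2) (heq : EEquiv E P1 P2 N1 m1 N2 m2)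
    (c : V → Option ℕ) (hc : G.IsConfig c) (hwd : G.WellDef c)
    (p : V) (hp : 0 < cval c p) :
    ∃ v : V, G.IsRoot v ∧ G.Reach v p ∧ 0 < cval c v := by
  exact aux_back G hwf.T5 c hwd _ p le_rfl hp
end

section
/- Let G(E) be a well-formed TFG for (N1,m1) ▷_E (N2,m2). If m is a reachable marking of (N1,m1) or of (N2,m2), then there exists a total, well-defined configuration c of G(E) compatible with m (i.e., c(p) = m(p) on all places in the domain of m). Conversely, for any total, well-defined configuration c, the restriction of c to the places of N1 is reachable in (N1,m1) if and only if the restriction of c to the places of N2 is reachable in (N2,m2). -/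
open Finset

variable {V : Type} [DecidableEq V]

theorem configuration_reachability {V : Type} [DecidableEq V] (G : TFG V) (E : EqSys V)
    (P1 P2 : Set V) [DecidablePred (· ∈ P1)] [DecidablePred (· ∈ P2)]
    (N1 : PetriNet ↥P1) (m1 : ↥P1 → ℕ) (N2 : PetriNet ↥P2) (m2 : ↥P2 → ℕ)
    (hwf : WellFormed G E P1 P2) (heq : EEquiv E P1 P2 N1 m1 N2 m2) :
    ((∀ m : ↥P1 → ℕ, N1.reach m1 m →
        ∃ c : V → Option ℕ, G.IsConfig c ∧ TotalConf c ∧ G.WellDef c ∧ CompatM c P1 m) ∧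
     (∀ m : ↥P2 → ℕ, N2.reach m2 m →
        ∃ c : V → Option ℕ, G.IsConfig c ∧ TotalConf c ∧ G.WellDef c ∧ CompatM c P2 m)) ∧
    (∀ c : V → Option ℕ, G.IsConfig c → TotalConf c → G.WellDef c →
        (N1.reach m1 (restrict c P1) ↔ N2.reach m2 (restrict c P2))) := by
  -- nodes occurring in E are non-constant
  have hfv : ∀ v, v ∈ fvars E → G.kval v = none := by
    intro v hv
    have : v ∈ {v | G.kval v = none} := by
      rw [hwf.T1]; exact Or.inr hv
    exact this
  have hP1 : ∀ v, v ∈ P1 → G.kval v = none := by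
    intro v hv
    have : v ∈ {v | G.kval v = none} := by
      rw [hwf.T1]; exact Or.inl (Or.inl hv)
    exact this
  have hP2 : ∀ v, v ∈ P2 → G.kval v = none := by
    intro v hv
    have : v ∈ {v | G.kval v = none} := by
      rw [hwf.T1]; exact Or.inl (Or.inr hv)
    exact this
  -- given a solution s of E, build a total well-defined configuration
  have mkconf : ∀ s : V → ℕ, Solves E s →
      ∃ c : V → Option ℕ, G.IsConfig c ∧ TotalConf c ∧ G.WellDef c ∧
        ∀ v, G.kval v = none → c v = some (s v) := by
    intro s hs
    refine ⟨fun v => some ((G.kval v).getD (s v)), ?_, ?_, ?_, ?_⟩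
    · intro v n h; simp [h]
    · intro v; simp
    · constructor
      · intro v w _; simp
      · intro v n hn
        simp only [Option.some.injEq] at hn
        cases hk : G.kval v with
        | some k =>
          constructor
          · intro hne
            exact absurd (hfv v ⟨(v, G.aggChildren v),
              (hwf.T4 v _).mp ⟨Or.inl rfl, hne⟩, Or.inl rfl⟩) (by simp [hk])
          · intro hne
            exact absurd (hfv v ⟨(v, G.redParents v),
              (hwf.T4 v _).mp ⟨Or.inr rfl, hne⟩, Or.inl rfl⟩) (by simp [hk])
        | none =>
          rw [hk] at hn; simp at hn; subst hn
          constructor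
          · intro hne
            have hE := (hwf.T4 v _).mp ⟨Or.inl rfl, hne⟩
            have := hs _ hE
            simp only at this
            rw [this]
            refine Finset.sum_congr rfl fun w hw => ?_
            have hw' : G.kval w = none := hfv w ⟨(v, G.aggChildren v), hE, Or.inr hw⟩
            simp [cval, hw']
          · intro hne
            have hE := (hwf.T4 v _).mp ⟨Or.inr rfl, hne⟩
            have := hs _ hE
            simp only at this
            rw [this]
            refine Finset.sum_congr rfl fun w hw => ?_
            have hw' : G.kval w = none := hfv w ⟨(v, G.redParents v), hE, Or.inr hw⟩
            simp [cval, hw']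
    · intro v hv; simp [hv]
  constructor
  · constructor
    · intro m hm
      obtain ⟨s, hs, hag⟩ := heq.A1l m hm
      obtain ⟨c, h1, h2, h3, h4⟩ := mkconf s hs
      exact ⟨c, h1, h2, h3, fun p => by rw [h4 _ (hP1 _ p.2), hag p]⟩
    · intro m hm
      obtain ⟨s, hs, hag⟩ := heq.A1r m hm
      obtain ⟨c, h1, h2, h3, h4⟩ := mkconf s hs
      exact ⟨c, h1, h2, h3, fun p => by rw [h4 _ (hP2 _ p.2), hag p]⟩
  · intro c _ htot hwd
    apply heq.A3
    refine ⟨cval c, ?_, fun p => rfl, fun p => rfl⟩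
    intro e he
    obtain ⟨n, hn⟩ := Option.ne_none_iff_exists'.mp (htot e.1)
    obtain ⟨hx, hne⟩ := (hwf.T4 e.1 e.2).mpr he
    have h2 := (hwd.2 e.1 n hn)
    have hval : cval c e.1 = n := by simp [cval, hn]
    rcases hx with hx | hx
    · rw [hval, hx]; exact h2.1 (hx ▸ hne)
    · rw [hval, hx]; exact h2.2 (hx ▸ hne)
end

section
/- Let G(E) be a well-formed TFG for (N1,m1) ▷_E (N2,m2). For any marking m1' of N1 there exists at most one total, well-defined configuration c of G(E) such that c ≡ m1' (c agrees with m1' on all places of N1). -/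
open Finset

variable {V : Type} [DecidableEq V]

theorem unicity_of_marking_reduction {V : Type} [DecidableEq V] (G : TFG V) (E : EqSys V)
    (P1 P2 : Set V) [DecidablePred (· ∈ P1)] [DecidablePred (· ∈ P2)]
    (N1 : PetriNet ↥P1) (m1 : ↥P1 → ℕ) (N2 : PetriNet ↥P2) (m2 : ↥P2 → ℕ)
    (hwf : WellFormed G E P1 P2) (heq : EEquiv E P1 P2 N1 m1 N2 m2)
    (m1' : ↥P1 → ℕ) (c1 c2 : V → Option ℕ)
    (hc1 : G.IsConfig c1) (ht1 : TotalConf c1) (hwd1 : G.WellDef c1) (hm1 : CompatM c1 P1 m1')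
    (hc2 : G.IsConfig c2) (ht2 : TotalConf c2) (hwd2 : G.WellDef c2) (hm2 : CompatM c2 P1 m1') :
    c1 = c2 := by

  classical
  -- relation: w is an agglomeration child of v
  set Ar : V → V → Prop := fun a b => (a, b) ∈ G.A with hAr
  -- measure: number of strict A-descendants
  set vs : Finset V := G.A.image Prod.snd with hvs
  set μ : V → ℕ := fun v => (vs.filter (fun w => Relation.TransGen Ar v w)).card with hμ
  have hmono : ∀ a b, Ar a b → G.Edge a b := fun a b h => Or.inr h
  have hdec : ∀ v w, (v, w) ∈ G.A → μ w < μ v := by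
    intro v w hvw
    apply Finset.card_lt_card
    constructor
    · intro x hx
      rw [Finset.mem_filter] at hx ⊢
      exact ⟨hx.1, Relation.TransGen.head hvw hx.2⟩
    · intro hsub
      have hw : w ∈ vs.filter (fun x => Relation.TransGen Ar v x) := by
        rw [Finset.mem_filter]
        exact ⟨Finset.mem_image.2 ⟨(v, w), hvw, rfl⟩, Relation.TransGen.single hvw⟩
      have := hsub hw
      rw [Finset.mem_filter] at this
      exact hwf.T5 w (Relation.TransGen.mono hmono w w this.2)
  have hchild : ∀ v w, w ∈ G.aggChildren v → (v, w) ∈ G.A := by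
    intro v w hw
    rw [TFG.aggChildren, Finset.mem_image] at hw
    obtain ⟨e, he, rfl⟩ := hw
    rw [Finset.mem_filter] at he
    have h1 := he.1
    have : e = (v, e.2) := by rw [← he.2]
    rwa [this] at h1
  have key : ∀ n v, μ v = n → c1 v = c2 v := by
    intro n
    induction n using Nat.strong_induction_on with
    | _ n ih =>
      intro v hv
      cases hk : G.kval v with
      | some k => rw [hc1 v k hk, hc2 v k hk]
      | none =>
        by_cases hp : v ∈ P1
        · rw [hm1 ⟨v, hp⟩, hm2 ⟨v, hp⟩]
        · -- v is not a circ-leaf, so it has agglomeration children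
          have hnl : ¬ G.IsCircLeaf v := fun h => hp ((hwf.T6leaf v hk).1 h)
          rw [TFG.IsCircLeaf] at hnl
          push_neg at hnl
          obtain ⟨w, hw⟩ := hnl
          have hne : (G.aggChildren v).Nonempty := by
            refine ⟨w, ?_⟩
            rw [TFG.aggChildren, Finset.mem_image]
            exact ⟨(v, w), Finset.mem_filter.2 ⟨hw, rfl⟩, rfl⟩
          cases h1 : c1 v with
          | none => exact absurd h1 (ht1 v)
          | some n1 =>
            cases h2 : c2 v with
            | none => exact absurd h2 (ht2 v)
            | some n2 =>
              have e1 := ((hwd1.2 v n1 h1).1 hne)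
              have e2 := ((hwd2.2 v n2 h2).1 hne)
              have hsum : ∑ x ∈ G.aggChildren v, cval c1 x
                  = ∑ x ∈ G.aggChildren v, cval c2 x := by
                apply Finset.sum_congr rfl
                intro x hx
                have hlt : μ x < n := hv ▸ hdec v x (hchild v x hx)
                have := ih (μ x) hlt x rfl
                simp [cval, this]
              rw [e1, e2, hsum]
  funext v
  exact key (μ v) v rfl
end

section
/- Let G(E) be a well-formed TFG for (N1,m1) ▷_E (N2,m2). A marking m1' is reachable in (N1,m1) if and only if there exists a total, well-defined configuration c with c ≡ m1' such that the restriction of c to the places of N2 is reachable in (N2,m2). -/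
open Finset

variable {V : Type} [DecidableEq V]

theorem reachability_decision {V : Type} [DecidableEq V] (G : TFG V) (E : EqSys V)
    (P1 P2 : Set V) [DecidablePred (· ∈ P1)] [DecidablePred (· ∈ P2)]
    (N1 : PetriNet ↥P1) (m1 : ↥P1 → ℕ) (N2 : PetriNet ↥P2) (m2 : ↥P2 → ℕ)
    (hwf : WellFormed G E P1 P2) (heq : EEquiv E P1 P2 N1 m1 N2 m2) (m1' : ↥P1 → ℕ) :
    N1.reach m1 m1' ↔
      ∃ c : V → Option ℕ, G.IsConfig c ∧ TotalConf c ∧ G.WellDef c ∧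
        CompatM c P1 m1' ∧ N2.reach m2 (restrict c P2) := by
  -- helper: nodes in P1 ∪ P2 ∪ fvars E have kval = none
  have hkn : ∀ v, v ∈ P1 ∪ P2 ∪ fvars E → G.kval v = none := by
    intro v hv
    have : v ∈ {v | G.kval v = none} := hwf.T1 ▸ hv
    exact this
  constructor
  · intro h1
    obtain ⟨s, hs, hag⟩ := heq.A1l m1' h1
    refine ⟨fun v => some ((G.kval v).getD (s v)), ?_, ?_, ?_, ?_, ?_⟩
    · intro v n hv; simp [hv]
    · intro v; simp
    · constructor
      · intro v w _; simp
      · intro v n hv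
        -- value lemma for nodes in fvars
        have hval : ∀ w ∈ fvars E, cval (fun v => some ((G.kval v).getD (s v))) w = s w := by
          intro w hw
          have := hkn w (Or.inr hw)
          simp [cval, this]
        constructor
        · intro hne
          have hmem : (v, G.aggChildren v) ∈ E := (hwf.T4 v _).1 ⟨Or.inl rfl, hne⟩
          have hv0 : G.kval v = none := hkn v (Or.inr ⟨_, hmem, Or.inl rfl⟩)
          simp only [hv0, Option.getD_none, Option.some.injEq] at hv
          subst hv
          rw [hs _ hmem]
          exact Finset.sum_congr rfl fun w hw => (hval w ⟨_, hmem, Or.inr hw⟩).symm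
        · intro hne
          have hmem : (v, G.redParents v) ∈ E := (hwf.T4 v _).1 ⟨Or.inr rfl, hne⟩
          have hv0 : G.kval v = none := hkn v (Or.inr ⟨_, hmem, Or.inl rfl⟩)
          simp only [hv0, Option.getD_none, Option.some.injEq] at hv
          subst hv
          rw [hs _ hmem]
          exact Finset.sum_congr rfl fun w hw => (hval w ⟨_, hmem, Or.inr hw⟩).symm
    · intro p
      have : G.kval ↑p = none := hkn ↑p (Or.inl (Or.inl p.2))
      simp [this, hag p]
    · have hrest : restrict (fun v => some ((G.kval v).getD (s v))) P2 = fun p : ↥P2 => s ↑p := by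
        funext p
        have : G.kval ↑p = none := hkn ↑p (Or.inl (Or.inr p.2))
        simp [_root_.restrict, cval, this]
      rw [hrest]
      exact (heq.A3 m1' (fun p : ↥P2 => s ↑p) ⟨s, hs, hag, fun p => rfl⟩).1 h1
  · rintro ⟨c, _, htot, ⟨_, hceq⟩, hcomp, hr2⟩
    have hsolves : Solves E (cval c) := by
      intro e he
      obtain ⟨v, X⟩ := e
      obtain ⟨hX, hne⟩ := (hwf.T4 v X).2 he
      obtain ⟨n, hn⟩ := Option.ne_none_iff_exists'.1 (htot v)
      have hcv : cval c v = n := by simp [cval, hn]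
      rcases hX with rfl | rfl
      · simpa [hcv] using (hceq v n hn).1 hne
      · simpa [hcv] using (hceq v n hn).2 hne
    refine (heq.A3 m1' (restrict c P2) ⟨cval c, hsolves, ?_, fun p => rfl⟩).2 hr2
    intro p
    simp [cval, hcomp p]
end

section
/- Let G(E) be a well-formed TFG for (N1,m1) ▷_E (N2,m2) with (N1,m1) a safe (1-bounded) Petri net. Then for every total, well-defined configuration c of G(E) such that the restriction of c to the places of N1 is reachable in (N1,m1), and every non-constant node v of G(E), we have c(v) ∈ {0,1}. -/
open Finset

variable {V : Type} [DecidableEq V]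

namespace SafeConfigAux

variable {V : Type} [DecidableEq V]

/-- Agglomeration parents of a node. -/
def aggParents (G : TFG V) (w : V) : Finset V :=
  (G.A.filter (fun e => e.2 = w)).image Prod.fst

lemma mem_aggChildren {G : TFG V} {v w : V} : w ∈ G.aggChildren v ↔ (v, w) ∈ G.A := by
  constructor
  · intro h
    simp only [TFG.aggChildren, Finset.mem_image, Finset.mem_filter] at h
    obtain ⟨e, ⟨he, h1⟩, h2⟩ := h
    have : e = (v, w) := by cases e; simp_all
    rwa [this] at he
  · intro h
    simp only [TFG.aggChildren, Finset.mem_image, Finset.mem_filter]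
    exact ⟨(v, w), ⟨h, rfl⟩, rfl⟩

lemma mem_redParents {G : TFG V} {v w : V} : w ∈ G.redParents v ↔ (w, v) ∈ G.R := by
  constructor
  · intro h
    simp only [TFG.redParents, Finset.mem_image, Finset.mem_filter] at h
    obtain ⟨e, ⟨he, h1⟩, h2⟩ := h
    have : e = (w, v) := by cases e; simp_all
    rwa [this] at he
  · intro h
    simp only [TFG.redParents, Finset.mem_image, Finset.mem_filter]
    exact ⟨(w, v), ⟨h, rfl⟩, rfl⟩

lemma mem_aggParents {G : TFG V} {v w : V} : w ∈ aggParents G v ↔ (w, v) ∈ G.A := by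
  constructor
  · intro h
    simp only [aggParents, Finset.mem_image, Finset.mem_filter] at h
    obtain ⟨e, ⟨he, h1⟩, h2⟩ := h
    have : e = (w, v) := by cases e; simp_all
    rwa [this] at he
  · intro h
    simp only [aggParents, Finset.mem_image, Finset.mem_filter]
    exact ⟨(w, v), ⟨h, rfl⟩, rfl⟩

/-- Endpoints of arcs of the TFG. -/
def nodes (G : TFG V) : Finset V :=
  (G.R ∪ G.A).image Prod.fst ∪ (G.R ∪ G.A).image Prod.snd

lemma mem_nodes_src {G : TFG V} {u w : V} (h : G.Edge u w) : u ∈ nodes G := by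
  rcases h with h | h <;>
  · apply Finset.mem_union_left
    exact Finset.mem_image.2 ⟨(u, w), by simp [Finset.mem_union, h], rfl⟩

lemma mem_nodes_tgt {G : TFG V} {u w : V} (h : G.Edge u w) : w ∈ nodes G := by
  rcases h with h | h <;>
  · apply Finset.mem_union_right
    exact Finset.mem_image.2 ⟨(u, w), by simp [Finset.mem_union, h], rfl⟩

open Classical in
/-- Number of (arc-endpoint) ancestors of a node. -/
noncomputable def gAnc (G : TFG V) (w : V) : ℕ :=
  ((nodes G).filter (fun a => Relation.TransGen G.Edge a w)).card

open Classical in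
/-- Number of (arc-endpoint) descendants of a node. -/
noncomputable def fDesc (G : TFG V) (u : V) : ℕ :=
  ((nodes G).filter (fun a => Relation.TransGen G.Edge u a)).card

lemma gAnc_lt {G : TFG V} (hacyc : ∀ x, ¬ Relation.TransGen G.Edge x x)
    {u w : V} (h : G.Edge u w) : gAnc G u < gAnc G w := by
  classical
  apply Finset.card_lt_card
  constructor
  · intro a ha
    simp only [Finset.mem_filter] at ha ⊢
    exact ⟨ha.1, ha.2.tail h⟩
  · intro hsub
    have hu : u ∈ (nodes G).filter (fun a => Relation.TransGen G.Edge a w) := by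
      simp only [Finset.mem_filter]
      exact ⟨mem_nodes_src h, Relation.TransGen.single h⟩
    have := hsub hu
    simp only [Finset.mem_filter] at this
    exact hacyc u this.2

lemma fDesc_lt {G : TFG V} (hacyc : ∀ x, ¬ Relation.TransGen G.Edge x x)
    {u w : V} (h : G.Edge u w) : fDesc G w < fDesc G u := by
  classical
  apply Finset.card_lt_card
  constructor
  · intro a ha
    simp only [Finset.mem_filter] at ha ⊢
    exact ⟨ha.1, (Relation.TransGen.single h).trans ha.2⟩
  · intro hsub
    have hw : w ∈ (nodes G).filter (fun a => Relation.TransGen G.Edge u a) := by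
      simp only [Finset.mem_filter]
      exact ⟨mem_nodes_tgt h, Relation.TransGen.single h⟩
    have := hsub hw
    simp only [Finset.mem_filter] at this
    exact hacyc w this.2

open Classical in
/-- Pick an agglomeration child. -/
noncomputable def pick (G : TFG V) (u : V) : V :=
  if h : (G.aggChildren u).Nonempty then h.choose else u

lemma pick_mem {G : TFG V} {u : V} (h : (G.aggChildren u).Nonempty) :
    pick G u ∈ G.aggChildren u := by
  rw [pick, dif_pos h]; exact h.choose_spec

open Classical in
/-- Fueled recomputation of the configuration after pushing the tokens of `v`
down `pick`-chosen agglomeration paths. -/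
noncomputable def aux (G : TFG V) (c : V → Option ℕ) (v : V) : ℕ → V → ℕ
  | 0, w => cval c w
  | n+1, w =>
    if Relation.TransGen G.Edge v w then
      if (G.redParents w).Nonempty then ∑ u ∈ G.redParents w, aux G c v n u
      else ∑ u ∈ aggParents G w, (if w = pick G u then aux G c v n u else 0)
    else cval c w

lemma aux_stab {G : TFG V} (hacyc : ∀ x, ¬ Relation.TransGen G.Edge x x)
    (c : V → Option ℕ) (v : V) :
    ∀ (n : ℕ) {m : ℕ} {w : V}, gAnc G w < n → gAnc G w < m →
      aux G c v n w = aux G c v m w := by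
  intro n
  induction n with
  | zero => intro m w h; omega
  | succ n ih =>
    intro m w hn hm
    obtain ⟨m', rfl⟩ : ∃ m', m = m' + 1 := ⟨m - 1, by omega⟩
    have key : ∀ u, G.Edge u w → aux G c v n u = aux G c v m' u := by
      intro u hu
      have h1 : gAnc G u < gAnc G w := gAnc_lt hacyc hu
      exact ih (by omega) (by omega)
    simp only [aux]
    split
    · split
      · exact Finset.sum_congr rfl fun u hu => key u (Or.inl (mem_redParents.1 hu))
      · refine Finset.sum_congr rfl fun u hu => ?_
        split
        · exact key u (Or.inr (mem_aggParents.1 hu))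
        · rfl
    · rfl

open Classical in
/-- The propagated configuration. -/
noncomputable def cnew (G : TFG V) (c : V → Option ℕ) (v : V) (w : V) : ℕ :=
  aux G c v (gAnc G w + 1) w

lemma cnew_notin {G : TFG V} {c : V → Option ℕ} {v w : V}
    (h : ¬ Relation.TransGen G.Edge v w) : cnew G c v w = cval c w := by
  classical
  rw [cnew]
  simp only [aux, if_neg h]

lemma cnew_red {G : TFG V} (hacyc : ∀ x, ¬ Relation.TransGen G.Edge x x)
    {c : V → Option ℕ} {v w : V}
    (h : Relation.TransGen G.Edge v w) (hne : (G.redParents w).Nonempty) :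
    cnew G c v w = ∑ u ∈ G.redParents w, cnew G c v u := by
  classical
  rw [cnew]
  simp only [aux, if_pos h, if_pos hne]
  refine Finset.sum_congr rfl fun u hu => ?_
  have := gAnc_lt hacyc (Or.inl (mem_redParents.1 hu) : G.Edge u w)
  exact aux_stab hacyc c v _ (by omega) (by omega)

lemma cnew_agg {G : TFG V} (hacyc : ∀ x, ¬ Relation.TransGen G.Edge x x)
    {c : V → Option ℕ} {v w : V}
    (h : Relation.TransGen G.Edge v w) (hne : ¬ (G.redParents w).Nonempty) :
    cnew G c v w = ∑ u ∈ aggParents G w, (if w = pick G u then cnew G c v u else 0) := by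
  classical
  rw [cnew]
  simp only [aux, if_pos h, if_neg hne]
  refine Finset.sum_congr rfl fun u hu => ?_
  have := gAnc_lt hacyc (Or.inr (mem_aggParents.1 hu) : G.Edge u w)
  split
  · exact aux_stab hacyc c v _ (by omega) (by omega)
  · rfl

lemma child_no_red {G : TFG V} {E : EqSys V} {P1 P2 : Set V}
    (hwf : WellFormed G E P1 P2) {w x : V} (hA : (w, x) ∈ G.A) :
    ¬ (G.redParents x).Nonempty := by
  rintro ⟨u, hu⟩
  have hR := mem_redParents.1 hu
  have heq := hwf.T3a w u x hA (Or.inl hR)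
  exact hwf.T3b w x ⟨heq ▸ hR, hA⟩

lemma cnew_child {G : TFG V} {E : EqSys V} {P1 P2 : Set V}
    (hwf : WellFormed G E P1 P2) {c : V → Option ℕ} {v w x : V}
    (hA : (w, x) ∈ G.A) (hS : Relation.TransGen G.Edge v x) :
    cnew G c v x = if x = pick G w then cnew G c v w else 0 := by
  rw [cnew_agg hwf.T5 hS (child_no_red hwf hA)]
  have hsing : aggParents G x = {w} := by
    ext u
    simp only [mem_aggParents, Finset.mem_singleton]
    constructor
    · intro h; exact hwf.T3a w u x hA (Or.inr h)
    · rintro rfl; exact hA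
  rw [hsing, Finset.sum_singleton]

lemma child_in_S {G : TFG V} {E : EqSys V} {P1 P2 : Set V}
    (hwf : WellFormed G E P1 P2) {v w x : V}
    (hA : (w, x) ∈ G.A) (hS : Relation.TransGen G.Edge v x) :
    v = w ∨ Relation.TransGen G.Edge v w := by
  obtain ⟨b, hb, he⟩ := Relation.TransGen.tail'_iff.1 hS
  have hbw : b = w := hwf.T3a w b x hA he
  subst hbw
  rcases Relation.reflTransGen_iff_eq_or_transGen.1 hb with h | h
  · exact Or.inl h.symm
  · exact Or.inr h

lemma solves_cnew {G : TFG V} {E : EqSys V} {P1 P2 : Set V}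
    (hwf : WellFormed G E P1 P2) {c : V → Option ℕ}
    (ht : TotalConf c) (hwd : G.WellDef c) (v : V) :
    Solves E (cnew G c v) := by
  classical
  intro e he
  obtain ⟨w, X⟩ := e
  obtain ⟨hX, hne⟩ := (hwf.T4 w X).mpr he
  obtain ⟨n, hn⟩ := Option.ne_none_iff_exists'.1 (ht w)
  have hdef := hwd.2 w n hn
  have hcv : cval c w = n := by simp [cval, hn]
  simp only at hX hne ⊢
  rcases hX with h | h
  · -- agglomeration children equation
    subst h
    by_cases hS : w = v ∨ Relation.TransGen G.Edge v w
    · -- all children are in succ⁺(v)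
      have hchild : ∀ x ∈ G.aggChildren w,
          cnew G c v x = if x = pick G w then cnew G c v w else 0 := by
        intro x hx
        have hA := mem_aggChildren.1 hx
        have hSx : Relation.TransGen G.Edge v x := by
          rcases hS with rfl | hS
          · exact Relation.TransGen.single (Or.inr hA)
          · exact hS.tail (Or.inr hA)
        exact cnew_child hwf hA hSx
      rw [Finset.sum_congr rfl hchild, Finset.sum_ite_eq' (G.aggChildren w) (pick G w)
        (fun _ => cnew G c v w), if_pos (pick_mem hne)]
    · push_neg at hS
      have hwne : cnew G c v w = cval c w := cnew_notin hS.2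
      have hchild : ∀ x ∈ G.aggChildren w, cnew G c v x = cval c x := by
        intro x hx
        apply cnew_notin
        intro hSx
        rcases child_in_S hwf (mem_aggChildren.1 hx) hSx with h | h
        · exact hS.1 h.symm
        · exact hS.2 h
      rw [Finset.sum_congr rfl hchild, hwne, hcv]
      exact hdef.1 hne
  · -- redundancy parents equation
    subst h
    by_cases hS : Relation.TransGen G.Edge v w
    · exact cnew_red hwf.T5 hS hne
    · have hwne : cnew G c v w = cval c w := cnew_notin hS
      have hpar : ∀ x ∈ G.redParents w, cnew G c v x = cval c x := by
        intro x hx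
        apply cnew_notin
        intro hSx
        exact hS (hSx.tail (Or.inl (mem_redParents.1 hx)))
      rw [Finset.sum_congr rfl hpar, hwne, hcv]
      exact hdef.2 hne

lemma path_exists {G : TFG V} {E : EqSys V} {P1 P2 : Set V}
    (hwf : WellFormed G E P1 P2) (c : V → Option ℕ) (v : V) :
    ∀ (n : ℕ) (u : V), fDesc G u < n → G.kval u = none →
      (u = v ∨ Relation.TransGen G.Edge v u) →
      ∃ p, p ∈ P1 ∧ cnew G c v p = cnew G c v u := by
  intro n
  induction n with
  | zero => intro u h; omega
  | succ n ih =>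
    intro u hn hku hu
    by_cases hP1 : u ∈ P1
    · exact ⟨u, hP1, rfl⟩
    · have hncl : ¬ G.IsCircLeaf u := fun h => hP1 ((hwf.T6leaf u hku).1 h)
      rw [TFG.IsCircLeaf] at hncl
      push_neg at hncl
      obtain ⟨y, hy⟩ := hncl
      have hnem : (G.aggChildren u).Nonempty := ⟨y, mem_aggChildren.2 hy⟩
      set x := pick G u with hx
      have hxA : (u, x) ∈ G.A := mem_aggChildren.1 (pick_mem hnem)
      have hedge : G.Edge u x := Or.inr hxA
      have hSx : Relation.TransGen G.Edge v x := by
        rcases hu with rfl | hS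
        · exact Relation.TransGen.single hedge
        · exact hS.tail hedge
      have hkx : G.kval x = none := by
        cases hgx : G.kval x with
        | none => rfl
        | some k => exact absurd hedge (hwf.T2 x (by rw [hgx]; simp) u)
      have hval : cnew G c v x = cnew G c v u := by
        rw [cnew_child hwf hxA hSx, if_pos rfl]
      have hflt : fDesc G x < n := by
        have := fDesc_lt hwf.T5 hedge
        omega
      obtain ⟨p, hp, hpe⟩ := ih x hflt hkx (Or.inr hSx)
      exact ⟨p, hp, by rw [hpe, hval]⟩

end SafeConfigAux


theorem safe_configurations {V : Type} [DecidableEq V] (G : TFG V) (E : EqSys V)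
    (P1 P2 : Set V) [DecidablePred (· ∈ P1)] [DecidablePred (· ∈ P2)]
    (N1 : PetriNet ↥P1) (m1 : ↥P1 → ℕ) (N2 : PetriNet ↥P2) (m2 : ↥P2 → ℕ)
    (hwf : WellFormed G E P1 P2) (heq : EEquiv E P1 P2 N1 m1 N2 m2) (hsafe : N1.Safe m1)
    (c : V → Option ℕ) (hc : G.IsConfig c) (ht : TotalConf c) (hwd : G.WellDef c)
    (hreach : N1.reach m1 (restrict c P1))
    (v : V) (hv : G.kval v = none) :
    cval c v = 0 ∨ cval c v = 1 := by
    classical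
  by_cases hvP1 : v ∈ P1
  · have h := hsafe _ hreach ⟨v, hvP1⟩
    have h2 : cval c v ≤ 1 := h
    omega
  · have hacyc := hwf.T5
    have hsc : Solves E (cval c) := by
      intro e he
      obtain ⟨hX, hne⟩ := (hwf.T4 e.1 e.2).mpr he
      obtain ⟨n, hn⟩ := Option.ne_none_iff_exists'.1 (ht e.1)
      have hdef := hwd.2 e.1 n hn
      have hcv : cval c e.1 = n := by simp [cval, hn]
      rcases hX with h | h
      · rw [hcv, h]; exact hdef.1 (h ▸ hne)
      · rw [hcv, h]; exact hdef.2 (h ▸ hne)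
    have hs' : Solves E (SafeConfigAux.cnew G c v) := SafeConfigAux.solves_cnew hwf ht hwd v
    have hP2 : ∀ p ∈ P2, SafeConfigAux.cnew G c v p = cval c p := by
      intro p hp
      apply SafeConfigAux.cnew_notin
      intro hS
      have hkp : G.kval p = none := by
        have : p ∈ {x | G.kval x = none} := by rw [hwf.T1]; exact Or.inl (Or.inr hp)
        exact this
      have hroot := (hwf.T6root p hkp).2 hp
      obtain ⟨b, _, he⟩ := Relation.TransGen.tail'_iff.1 hS
      exact hroot b he
    have r2 : N2.reach m2 (restrict c P2) :=
      (heq.A3 (restrict c P1) (restrict c P2)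
        ⟨cval c, hsc, fun p => rfl, fun p => rfl⟩).mp hreach
    have r1' : N1.reach m1 (fun p : ↥P1 => SafeConfigAux.cnew G c v ↑p) :=
      (heq.A3 (fun p : ↥P1 => SafeConfigAux.cnew G c v ↑p) (restrict c P2)
        ⟨SafeConfigAux.cnew G c v, hs', fun p => rfl, fun p => hP2 p p.2⟩).mpr r2
    obtain ⟨p, hpP1, hpv⟩ :=
      SafeConfigAux.path_exists hwf c v (SafeConfigAux.fDesc G v + 1) v (by omega) hv (Or.inl rfl)
    have hle := hsafe _ r1' ⟨p, hpP1⟩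
    simp only at hle
    have hvv : SafeConfigAux.cnew G c v v = cval c v := SafeConfigAux.cnew_notin (hacyc v)
    rw [hpv, hvv] at hle
    omega
end
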